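/- Residual Noether symmetries in the presence of gravity (3D): suppose the 3D cell Lagrangian has the form L = L₀ + Π, where L₀ : (ℝ³)¹⁶ → ℝ satisfies L₀(Rx₁+c, …, Rx₁₆+c) = L₀(x₁, …, x₁₆) for every R ∈ SO(3) and c ∈ ℝ³, and Π(x₁,…,x₁₆) := −κ Σ_{p odd} g·x_p for a fixed constant κ ∈ ℝ and a fixed vector g ∈ ℝ³. If the discrete field φ satisfies the 3D discrete Euler–Lagrange node equations at every node with 0 < j < N, then for all 0 ≤ j ≤ N−2: (i) ⟨𝐉_l^{j+1} − 𝐉_l^j, c⟩ = 0 for every c ∈ ℝ³ with g·c = 0 (the components of the discrete linear momentum orthogonal to g are conserved), and (ii) g·(𝐉_r^{j+1} − 𝐉_r^j) = 0 (the discrete angular momentum about the axis g is conserved), where 𝐉_l^j := Σ_{cells □^j} Σ_{p even} D_pL(j¹φ(□^j)) and 𝐉_r^j := Σ_{cells □^j} Σ_{p even} x_p × D_pL(j¹φ(□^j)). -/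

import Mathlib

open scoped RealInnerProductSpace

noncomputable section

/-- The space `ℝ³` as a Euclidean space. -/
abbrev E3 : Type := EuclideanSpace ℝ (Fin 3)

/-- Partial gradient `D_pL ∈ ℝ³` of a cell Lagrangian `L` in its `p`-th slot. -/
noncomputable def pgrad3 {k : ℕ} (L : (Fin k → E3) → ℝ) (x : Fin k → E3) (p : Fin k) : E3 :=
  gradient (fun y => L (Function.update x p y)) (x p)

/-- Cross product on `ℝ³`. -/
def cross3 (u v : E3) : E3 :=
  WithLp.toLp 2 ![u 1 * v 2 - u 2 * v 1, u 2 * v 0 - u 0 * v 2, u 0 * v 1 - u 1 * v 0]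

/-- `a`-offsets of the 16 slots of a 3D cell (slots `0,…,15` correspond to the paper's
slots `1,…,16`; slot `2m` is the time-`j` value and slot `2m+1` the time-`j+1` value at
the `m`-th spatial node `(a,b,c), (a+1,b,c), (a,b+1,c), (a,b,c+1), (a+1,b+1,c),
(a,b+1,c+1), (a+1,b,c+1), (a+1,b+1,c+1)`). -/
def offA : Fin 16 → ℕ := ![0,0,1,1,0,0,0,0,1,1,0,0,1,1,1,1]
/-- `b`-offsets of the 16 slots of a 3D cell. -/
def offB : Fin 16 → ℕ := ![0,0,0,0,1,1,0,0,1,1,1,1,0,0,1,1]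
/-- `c`-offsets of the 16 slots of a 3D cell. -/
def offC : Fin 16 → ℕ := ![0,0,0,0,0,0,1,1,0,0,1,1,1,1,1,1]

/-- The node of the 3D cell `□^j_{a,b,c}` occupied by slot `s`. -/
def cellNode3 (j a b c : ℕ) (s : Fin 16) : ℕ × ℕ × ℕ × ℕ :=
  (j + s.val % 2, a + offA s, b + offB s, c + offC s)

/-- First jet of the discrete field on the 3D cell `□^j_{a,b,c}`. -/
def jet3 (φ : ℕ → ℕ → ℕ → ℕ → E3) (j a b c : ℕ) : Fin 16 → E3 :=
  fun s => φ (j + s.val % 2) (a + offA s) (b + offB s) (c + offC s)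

/-- Sum of `D_pL(j¹φ(□))` over all pairs `(□, p)` such that the given node is incident
to the 3D cell `□` in slot `p`. -/
noncomputable def delSum3 (N A B C : ℕ) (L : (Fin 16 → E3) → ℝ)
    (φ : ℕ → ℕ → ℕ → ℕ → E3) (nd : ℕ × ℕ × ℕ × ℕ) : E3 :=
  ∑ j' ∈ Finset.range N, ∑ a' ∈ Finset.range A, ∑ b' ∈ Finset.range B,
    ∑ c' ∈ Finset.range C, ∑ s : Fin 16,
      if cellNode3 j' a' b' c' s = nd then pgrad3 L (jet3 φ j' a' b' c') s else 0

/-- The even paper slots `2, 4, …, 16` (odd slots `1, 3, …, 15` here). -/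
def evenSlot (m : Fin 8) : Fin 16 := ⟨2 * m.val + 1, by omega⟩

/-- The odd paper slots `1, 3, …, 15` (even slots `0, 2, …, 14` here), carrying the
time-`j` values. -/
def oddSlot (m : Fin 8) : Fin 16 := ⟨2 * m.val, by omega⟩

/-- Total discrete linear momentum at time level `j` (3D). -/
noncomputable def Jlin3 (A B C : ℕ) (L : (Fin 16 → E3) → ℝ)
    (φ : ℕ → ℕ → ℕ → ℕ → E3) (j : ℕ) : E3 :=
  ∑ a ∈ Finset.range A, ∑ b ∈ Finset.range B, ∑ c ∈ Finset.range C,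
    ∑ m : Fin 8, pgrad3 L (jet3 φ j a b c) (evenSlot m)

/-- Total discrete angular momentum at time level `j` (3D). -/
noncomputable def Jang3 (A B C : ℕ) (L : (Fin 16 → E3) → ℝ)
    (φ : ℕ → ℕ → ℕ → ℕ → E3) (j : ℕ) : E3 :=
  ∑ a ∈ Finset.range A, ∑ b ∈ Finset.range B, ∑ c ∈ Finset.range C,
    ∑ m : Fin 8,
      cross3 (jet3 φ j a b c (evenSlot m)) (pgrad3 L (jet3 φ j a b c) (evenSlot m))

theorem pgrad_inner {k : ℕ} (L : (Fin k → E3) → ℝ) (x : Fin k → E3) (hL : DifferentiableAt ℝ L x)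
    (p : Fin k) (v : E3) : ⟪pgrad3 L x p, v⟫ = fderiv ℝ L x (Pi.single p v) := by
  have h1 : HasFDerivAt (fun y => L (Function.update x p y))
      ((fderiv ℝ L x).comp (.pi (Pi.single p (.id ℝ E3)))) (x p) := by
    have h0 := hasFDerivAt_update (𝕜 := ℝ) (i := p) x (x p)
    exact HasFDerivAt.comp (x p)
      (show HasFDerivAt L (fderiv ℝ L x) (Function.update x p (x p)) by
        rw [Function.update_eq_self]; exact hL.hasFDerivAt) h0
  have h2 := h1.hasGradientAt
  rw [pgrad3, h2.gradient, InnerProductSpace.toDual_symm_apply]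
  simp only [ContinuousLinearMap.comp_apply, ContinuousLinearMap.pi_apply]
  congr 1
  ext q i
  rcases eq_or_ne q p with h | h <;> simp [Pi.single_apply, h]

def Amat : Fin 3 → Matrix (Fin 3) (Fin 3) ℝ :=
  ![![![1,0,0],![0,0,0],![0,0,0]], ![![0,0,0],![0,1,0],![0,0,0]], ![![0,0,0],![0,0,0],![0,0,1]]]
def Kmat : Fin 3 → Matrix (Fin 3) (Fin 3) ℝ :=
  ![![![0,0,0],![0,0,-1],![0,1,0]], ![![0,0,1],![0,0,0],![-1,0,0]], ![![0,-1,0],![1,0,0],![0,0,0]]]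
def Cmat : Fin 3 → Matrix (Fin 3) (Fin 3) ℝ :=
  ![![![0,0,0],![0,1,0],![0,0,1]], ![![1,0,0],![0,0,0],![0,0,1]], ![![1,0,0],![0,1,0],![0,0,0]]]

theorem Amat_apply (k i j : Fin 3) : Amat k i j = (![![![1,0,0],![0,0,0],![0,0,0]], ![![0,0,0],![0,1,0],![0,0,0]],
    ![![0,0,0],![0,0,0],![0,0,1]]] : Fin 3 → Fin 3 → Fin 3 → ℝ) k i j := rfl
theorem Kmat_apply (k i j : Fin 3) : Kmat k i j = (![![![0,0,0],![0,0,-1],![0,1,0]], ![![0,0,1],![0,0,0],![-1,0,0]],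
    ![![0,-1,0],![1,0,0],![0,0,0]]] : Fin 3 → Fin 3 → Fin 3 → ℝ) k i j := rfl
theorem Cmat_apply (k i j : Fin 3) : Cmat k i j = (![![![0,0,0],![0,1,0],![0,0,1]], ![![1,0,0],![0,0,0],![0,0,1]],
    ![![1,0,0],![0,1,0],![0,0,0]]] : Fin 3 → Fin 3 → Fin 3 → ℝ) k i j := rfl

def rotM (k : Fin 3) (t : ℝ) : Matrix (Fin 3) (Fin 3) ℝ :=
  Amat k + Real.sin t • Kmat k + Real.cos t • Cmat k

theorem amat_add_cmat (k : Fin 3) : Amat k + Cmat k = 1 := by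
  fin_cases k <;> · ext i j; fin_cases i <;> fin_cases j <;>
    simp only [Matrix.add_apply] <;>
    simp [Amat_apply, Cmat_apply, Matrix.one_apply, Matrix.vecHead, Matrix.vecTail]

theorem rotM_mem (k : Fin 3) (t : ℝ) :
    rotM k t ∈ Matrix.specialOrthogonalGroup (Fin 3) ℝ := by
  rw [Matrix.mem_specialOrthogonalGroup_iff]
  constructor
  · rw [Matrix.mem_orthogonalGroup_iff]
    have h := Real.sin_sq_add_cos_sq t
    ext i j
    fin_cases k <;> fin_cases i <;> fin_cases j <;>
      · simp only [Matrix.mul_apply, Matrix.star_apply, rotM, Matrix.add_apply, Matrix.smul_apply]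
        simp [rotM, Amat_apply, Kmat_apply, Cmat_apply, Matrix.mul_apply, Fin.sum_univ_three, Matrix.one_apply,
          Matrix.star_apply, Matrix.vecHead, Matrix.vecTail] <;>
        nlinarith [h]
  · have h := Real.sin_sq_add_cos_sq t
    fin_cases k <;>
      · simp only [Matrix.det_fin_three, rotM, Matrix.add_apply, Matrix.smul_apply]
        simp [rotM, Amat_apply, Kmat_apply, Cmat_apply, Matrix.det_fin_three, Matrix.vecHead, Matrix.vecTail] <;>
        nlinarith [h]

theorem kmat_apply (k : Fin 3) (v : E3) :
    Matrix.toEuclideanLin (Kmat k) v = cross3 (EuclideanSpace.single k (1:ℝ)) v := by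
  ext i
  fin_cases k <;> fin_cases i <;>
    simp [Matrix.toEuclideanLin_apply, Matrix.mulVec, dotProduct, Fin.sum_univ_three,
      Kmat_apply, cross3, EuclideanSpace.single_apply] <;> ring

theorem toEuclideanLin_one (v : E3) : Matrix.toEuclideanLin (1 : Matrix (Fin 3) (Fin 3) ℝ) v = v := by
  simp [Matrix.toEuclideanLin_apply]

theorem fderiv_trans_dir (L₀ : (Fin 16 → E3) → ℝ) (hL₀ : Differentiable ℝ L₀)
    (hinv : ∀ (R : Matrix.specialOrthogonalGroup (Fin 3) ℝ) (cc : E3) (x : Fin 16 → E3),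
      L₀ (fun p => Matrix.toEuclideanLin (R : Matrix (Fin 3) (Fin 3) ℝ) (x p) + cc) = L₀ x)
    (x : Fin 16 → E3) (c : E3) : fderiv ℝ L₀ x (fun _ => c) = 0 := by
  have hconst : ∀ t : ℝ, L₀ (fun p => x p + t • c) = L₀ x := by
    intro t
    have h := hinv 1 (t • c) x
    simpa [toEuclideanLin_one] using h
  have hγ : HasDerivAt (fun t : ℝ => (fun p => x p + t • c : Fin 16 → E3))
      (fun _ => c) 0 := by
    have h1 : HasDerivAt (fun t : ℝ => t • (fun _ => c : Fin 16 → E3))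
        ((1:ℝ) • (fun _ => c : Fin 16 → E3)) 0 := (hasDerivAt_id 0).smul_const _
    have h2 := h1.const_add x
    simp only [one_smul] at h2
    exact h2
  have hc := (hL₀ _).hasFDerivAt.comp_hasDerivAt 0 hγ
  rw [Function.comp_def] at hc
  have h0 : (fun t : ℝ => L₀ (fun p => x p + t • c)) = fun _ => L₀ x := funext hconst
  rw [h0] at hc
  simp only [zero_smul, add_zero] at hc
  have := (hasDerivAt_const (0:ℝ) (L₀ x)).unique hc
  simpa using this.symm

theorem fderiv_rot_dir (L₀ : (Fin 16 → E3) → ℝ) (hL₀ : Differentiable ℝ L₀)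
    (hinv : ∀ (R : Matrix.specialOrthogonalGroup (Fin 3) ℝ) (cc : E3) (x : Fin 16 → E3),
      L₀ (fun p => Matrix.toEuclideanLin (R : Matrix (Fin 3) (Fin 3) ℝ) (x p) + cc) = L₀ x)
    (x : Fin 16 → E3) (k : Fin 3) :
    fderiv ℝ L₀ x (fun p => cross3 (EuclideanSpace.single k (1:ℝ)) (x p)) = 0 := by
  set a : Fin 16 → E3 := fun p => Matrix.toEuclideanLin (Amat k) (x p) with ha
  set b : Fin 16 → E3 := fun p => Matrix.toEuclideanLin (Kmat k) (x p) with hb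
  set d : Fin 16 → E3 := fun p => Matrix.toEuclideanLin (Cmat k) (x p) with hd
  have hdecomp : ∀ t : ℝ, (fun p => Matrix.toEuclideanLin (rotM k t) (x p))
      = a + Real.sin t • b + Real.cos t • d := by
    intro t
    funext p
    simp only [rotM, map_add, map_smul, LinearMap.add_apply, LinearMap.smul_apply,
      Pi.add_apply, Pi.smul_apply, ha, hb, hd]
  have had : a + d = x := by
    funext p
    have : Matrix.toEuclideanLin (Amat k + Cmat k) (x p) = x p := by
      rw [amat_add_cmat]; exact toEuclideanLin_one (x p)
    simpa [map_add, ha, hd] using this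
  have hconst : ∀ t : ℝ, L₀ (a + Real.sin t • b + Real.cos t • d) = L₀ x := by
    intro t
    rw [← hdecomp t]
    have h := hinv ⟨rotM k t, rotM_mem k t⟩ 0 x
    simpa using h
  have hγ : HasDerivAt (fun t : ℝ => a + Real.sin t • b + Real.cos t • d) b 0 := by
    have h1 := ((Real.hasDerivAt_sin 0).smul_const b).const_add a
    have h2 := (Real.hasDerivAt_cos 0).smul_const d
    have h3 := h1.add h2
    simp only [Real.cos_zero, Real.sin_zero, one_smul, neg_zero, zero_smul, add_zero] at h3
    exact h3
  have hγ0 : a + Real.sin 0 • b + Real.cos 0 • d = x := by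
    simp only [Real.sin_zero, Real.cos_zero, zero_smul, one_smul, add_zero, had]
  have hL' : HasFDerivAt L₀ (fderiv ℝ L₀ x) (a + Real.sin 0 • b + Real.cos 0 • d) :=
    hγ0 ▸ (hL₀ x).hasFDerivAt
  have hc := hL'.comp_hasDerivAt 0 hγ
  rw [Function.comp_def] at hc
  have h0 : (fun t : ℝ => L₀ (a + Real.sin t • b + Real.cos t • d)) = fun _ => L₀ x :=
    funext hconst
  rw [h0] at hc
  have hz := (hasDerivAt_const (0:ℝ) (L₀ x)).unique hc
  have hbx : b = fun p => cross3 (EuclideanSpace.single k (1:ℝ)) (x p) := by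
    funext p; exact kmat_apply k (x p)
  rw [← hbx]
  exact hz.symm

theorem cross3_add_right (u v w : E3) : cross3 u (v + w) = cross3 u v + cross3 u w := by
  ext i; fin_cases i <;> · simp [cross3]; ring
theorem cross3_zero_right (u : E3) : cross3 u 0 = 0 := by
  ext i; fin_cases i <;> simp [cross3]
theorem inner_cross3 (g u v : E3) : ⟪g, cross3 u v⟫ = ⟪v, cross3 g u⟫ := by
  simp [cross3, PiLp.inner_apply, RCLike.inner_apply, Fin.sum_univ_three]; ring
theorem inner_cross3_self (g v : E3) : ⟪g, cross3 g v⟫ = 0 := by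
  simp [cross3, PiLp.inner_apply, RCLike.inner_apply, Fin.sum_univ_three]; ring
theorem cross3_decomp (g v : E3) :
    cross3 g v = ∑ k : Fin 3, g k • cross3 (EuclideanSpace.single k (1:ℝ)) v := by
  ext i
  have : (∑ k : Fin 3, g k • cross3 (EuclideanSpace.single k (1:ℝ)) v) i
      = ∑ k : Fin 3, g k • (cross3 (EuclideanSpace.single k (1:ℝ)) v i) := by
    rw [WithLp.ofLp_sum, Finset.sum_apply]; rfl
  rw [this]
  fin_cases i <;> · simp [cross3, Fin.sum_univ_three, EuclideanSpace.single_apply]; ring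

def piT (κ : ℝ) (g : E3) : (Fin 16 → E3) →L[ℝ] ℝ :=
  (-κ) • (∑ m : Fin 8, (innerSL ℝ g).comp (ContinuousLinearMap.proj (oddSlot m)))

theorem piT_apply (κ : ℝ) (g : E3) (w : Fin 16 → E3) :
    piT κ g w = -κ * ∑ m : Fin 8, ⟪g, w (oddSlot m)⟫ := by
  simp [piT, ContinuousLinearMap.sum_apply, smul_eq_mul]

theorem offA_le (s : Fin 16) : offA s ≤ 1 := by fin_cases s <;> decide
theorem offB_le (s : Fin 16) : offB s ≤ 1 := by fin_cases s <;> decide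
theorem offC_le (s : Fin 16) : offC s ≤ 1 := by fin_cases s <;> decide

theorem sum_range_even_odd {M : Type*} [AddCommMonoid M] (n : ℕ) (g : ℕ → M) :
    ∑ i ∈ Finset.range (2*n), g i
      = (∑ i ∈ Finset.range n, g (2*i)) + ∑ i ∈ Finset.range n, g (2*i+1) := by
  induction n with
  | zero => simp
  | succ n ih =>
    rw [show 2*(n+1) = 2*n+1+1 by ring, Finset.sum_range_succ, Finset.sum_range_succ, ih,
      Finset.sum_range_succ, Finset.sum_range_succ (f := fun i => g (2*i+1))]
    abel

theorem sum16split {M : Type*} [AddCommMonoid M] (f : Fin 16 → M) :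
    ∑ s : Fin 16, f s = (∑ m : Fin 8, f (oddSlot m)) + ∑ m : Fin 8, f (evenSlot m) := by
  set g : ℕ → M := fun i => f ⟨i % 16, Nat.mod_lt _ (by norm_num)⟩ with hg
  have h1 : ∑ s : Fin 16, f s = ∑ i ∈ Finset.range 16, g i := by
    rw [← Fin.sum_univ_eq_sum_range]
    exact Finset.sum_congr rfl fun i _ => by
      congr 1; exact Fin.ext (by simp [Nat.mod_eq_of_lt i.isLt])
  have h2 : ∑ m : Fin 8, f (oddSlot m) = ∑ i ∈ Finset.range 8, g (2*i) := by
    rw [← Fin.sum_univ_eq_sum_range (fun i => g (2*i)) 8]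
    exact Finset.sum_congr rfl fun i _ => by
      congr 1; exact Fin.ext (by simp [oddSlot]; omega)
  have h3 : ∑ m : Fin 8, f (evenSlot m) = ∑ i ∈ Finset.range 8, g (2*i+1) := by
    rw [← Fin.sum_univ_eq_sum_range (fun i => g (2*i+1)) 8]
    exact Finset.sum_congr rfl fun i _ => by
      congr 1; exact Fin.ext (by simp [evenSlot]; omega)
  rw [h1, h2, h3, show (16:ℕ) = 2*8 by norm_num, sum_range_even_odd]

theorem sum_comm3 {M : Type*} [AddCommMonoid M] {ι : Type*} {s1 s2 s3 : Finset ℕ}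
    {t : Finset ι} (f : ℕ → ℕ → ℕ → ι → M) :
    (∑ a ∈ s1, ∑ b ∈ s2, ∑ c ∈ s3, ∑ x ∈ t, f a b c x)
      = ∑ x ∈ t, ∑ a ∈ s1, ∑ b ∈ s2, ∑ c ∈ s3, f a b c x := by
  have h1 : ∀ a b, (∑ c ∈ s3, ∑ x ∈ t, f a b c x) = ∑ x ∈ t, ∑ c ∈ s3, f a b c x :=
    fun _ _ => Finset.sum_comm
  simp_rw [h1]
  have h2 : ∀ a, (∑ b ∈ s2, ∑ x ∈ t, ∑ c ∈ s3, f a b c x)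
      = ∑ x ∈ t, ∑ b ∈ s2, ∑ c ∈ s3, f a b c x := fun _ => Finset.sum_comm
  simp_rw [h2]
  exact Finset.sum_comm

theorem ifsplit {M : Type*} [AddCommMonoid M] (j' a' b' c' : ℕ) (s : Fin 16)
    (j a b c : ℕ) (v : M) :
    (if cellNode3 j' a' b' c' s = (j + 1, a, b, c) then v else 0)
      = if c = c' + offC s then if b = b' + offB s then if a = a' + offA s then
          if j' + s.val % 2 = j + 1 then v else 0 else 0 else 0 else 0 := by
  simp only [cellNode3, Prod.mk.injEq]
  split_ifs <;> first | rfl | omega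

theorem node_collapse {M : Type*} [AddCommMonoid M] (A B C a0 b0 c0 : ℕ)
    (ha : a0 ≤ A) (hb : b0 ≤ B) (hc : c0 ≤ C) (v : M) :
    (∑ a ∈ Finset.range (A+1), ∑ b ∈ Finset.range (B+1), ∑ c ∈ Finset.range (C+1),
      if c = c0 then if b = b0 then if a = a0 then v else 0 else 0 else 0)
      = v := by
  have h3 : ∀ a b, (∑ c ∈ Finset.range (C+1),
      if c = c0 then if b = b0 then if a = a0 then v else 0 else 0 else 0)
      = if b = b0 then if a = a0 then v else 0 else 0 := by
    intro a b
    rw [Finset.sum_ite_eq' (Finset.range (C+1)) c0]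
    simp [Finset.mem_range, Nat.lt_succ_iff, hc]
  simp_rw [h3]
  have h2 : ∀ a, (∑ b ∈ Finset.range (B+1), if b = b0 then if a = a0 then v else 0 else 0)
      = if a = a0 then v else 0 := by
    intro a
    rw [Finset.sum_ite_eq' (Finset.range (B+1)) b0]
    simp [Finset.mem_range, Nat.lt_succ_iff, hb]
  simp_rw [h2]
  rw [Finset.sum_ite_eq' (Finset.range (A+1)) a0]
  simp [Finset.mem_range, Nat.lt_succ_iff, ha]

theorem time_collapse {M : Type*} [AddCommMonoid M] (N j : ℕ) (hj : j + 2 ≤ N)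
    (f : ℕ → Fin 16 → M) :
    (∑ j' ∈ Finset.range N, ∑ s : Fin 16, if j' + s.val % 2 = j + 1 then f j' s else 0)
      = (∑ m : Fin 8, f j (evenSlot m)) + ∑ m : Fin 8, f (j+1) (oddSlot m) := by
  rw [Finset.sum_comm,
    sum16split (f := fun s => ∑ j' ∈ Finset.range N, if j' + s.val % 2 = j + 1 then f j' s else 0)]
  have hodd : ∀ m : Fin 8, (oddSlot m).val % 2 = 0 := by intro m; simp only [oddSlot]; omega
  have heven : ∀ m : Fin 8, (evenSlot m).val % 2 = 1 := by intro m; simp only [evenSlot]; omega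
  have h1 : ∀ m : Fin 8,
      (∑ j' ∈ Finset.range N, if j' + (oddSlot m).val % 2 = j + 1 then f j' (oddSlot m) else 0)
        = f (j+1) (oddSlot m) := by
    intro m
    simp only [hodd, add_zero]
    rw [Finset.sum_ite_eq' (Finset.range N) (j+1)]
    simp [Finset.mem_range]; omega
  have h2 : ∀ m : Fin 8,
      (∑ j' ∈ Finset.range N, if j' + (evenSlot m).val % 2 = j + 1 then f j' (evenSlot m) else 0)
        = f j (evenSlot m) := by
    intro m
    simp only [heven, add_left_inj]
    rw [Finset.sum_ite_eq' (Finset.range N)]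
    simp [Finset.mem_range]; omega
  rw [Finset.sum_congr rfl fun m _ => h1 m, Finset.sum_congr rfl fun m _ => h2 m, add_comm]

theorem node_sum {M : Type*} [AddCommMonoid M] (N A B C : ℕ)
    (F : ℕ → ℕ → ℕ → ℕ → Fin 16 → M) (j : ℕ) (hj : j + 2 ≤ N) :
    (∑ a ∈ Finset.range (A+1), ∑ b ∈ Finset.range (B+1), ∑ c ∈ Finset.range (C+1),
      ∑ j' ∈ Finset.range N, ∑ a' ∈ Finset.range A, ∑ b' ∈ Finset.range B,
        ∑ c' ∈ Finset.range C, ∑ s : Fin 16,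
          if cellNode3 j' a' b' c' s = (j+1, a, b, c) then F j' a' b' c' s else 0)
    = ∑ a' ∈ Finset.range A, ∑ b' ∈ Finset.range B, ∑ c' ∈ Finset.range C,
        ((∑ m : Fin 8, F j a' b' c' (evenSlot m)) + ∑ m : Fin 8, F (j+1) a' b' c' (oddSlot m)) := by
  have step : (∑ a ∈ Finset.range (A+1), ∑ b ∈ Finset.range (B+1), ∑ c ∈ Finset.range (C+1),
      ∑ j' ∈ Finset.range N, ∑ a' ∈ Finset.range A, ∑ b' ∈ Finset.range B,
        ∑ c' ∈ Finset.range C, ∑ s : Fin 16,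
          if cellNode3 j' a' b' c' s = (j+1, a, b, c) then F j' a' b' c' s else 0)
      = ∑ j' ∈ Finset.range N, ∑ a' ∈ Finset.range A, ∑ b' ∈ Finset.range B,
        ∑ c' ∈ Finset.range C, ∑ s : Fin 16,
        ∑ a ∈ Finset.range (A+1), ∑ b ∈ Finset.range (B+1), ∑ c ∈ Finset.range (C+1),
          if cellNode3 j' a' b' c' s = (j+1, a, b, c) then F j' a' b' c' s else 0 := by
    rw [sum_comm3]
    refine Finset.sum_congr rfl fun j' _ => ?_
    rw [sum_comm3]
    refine Finset.sum_congr rfl fun a' _ => ?_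
    rw [sum_comm3]
    refine Finset.sum_congr rfl fun b' _ => ?_
    rw [sum_comm3]
    refine Finset.sum_congr rfl fun c' _ => ?_
    rw [sum_comm3]
  rw [step]
  have coll : ∀ j' a' b' c' (s : Fin 16), a' ∈ Finset.range A → b' ∈ Finset.range B →
      c' ∈ Finset.range C →
      (∑ a ∈ Finset.range (A+1), ∑ b ∈ Finset.range (B+1), ∑ c ∈ Finset.range (C+1),
        if cellNode3 j' a' b' c' s = (j+1, a, b, c) then F j' a' b' c' s else 0)
      = if j' + s.val % 2 = j + 1 then F j' a' b' c' s else 0 := by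
    intro j' a' b' c' s ha hb hc
    simp only [ifsplit]
    exact node_collapse A B C (a' + offA s) (b' + offB s) (c' + offC s)
      (by have := offA_le s; simp at ha; omega)
      (by have := offB_le s; simp at hb; omega)
      (by have := offC_le s; simp at hc; omega) _
  have step2 : ∀ j' ∈ Finset.range N, (∑ a' ∈ Finset.range A, ∑ b' ∈ Finset.range B,
      ∑ c' ∈ Finset.range C, ∑ s : Fin 16,
        ∑ a ∈ Finset.range (A+1), ∑ b ∈ Finset.range (B+1), ∑ c ∈ Finset.range (C+1),
          if cellNode3 j' a' b' c' s = (j+1, a, b, c) then F j' a' b' c' s else 0)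
      = ∑ a' ∈ Finset.range A, ∑ b' ∈ Finset.range B, ∑ c' ∈ Finset.range C, ∑ s : Fin 16,
          if j' + s.val % 2 = j + 1 then F j' a' b' c' s else 0 := by
    intro j' _
    refine Finset.sum_congr rfl fun a' ha => Finset.sum_congr rfl fun b' hb =>
      Finset.sum_congr rfl fun c' hc => Finset.sum_congr rfl fun s _ => ?_
    exact coll j' a' b' c' s ha hb hc
  rw [Finset.sum_congr rfl step2]
  rw [(sum_comm3 (s1 := Finset.range A) (s2 := Finset.range B) (s3 := Finset.range C)
    (t := Finset.range N) fun a' b' c' j' => ∑ s : Fin 16,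
      if j' + s.val % 2 = j + 1 then F j' a' b' c' s else 0).symm]
  refine Finset.sum_congr rfl fun a' _ => Finset.sum_congr rfl fun b' _ =>
    Finset.sum_congr rfl fun c' _ => ?_
  exact time_collapse N j hj fun j' s => F j' a' b' c' s


def crossLin (u : E3) : E3 →ₗ[ℝ] E3 where
  toFun := cross3 u
  map_add' := cross3_add_right u
  map_smul' r v := by
    ext i; fin_cases i <;> · simp [cross3]; ring

theorem crossLin_apply (u v : E3) : crossLin u v = cross3 u v := rfl

/-- **Residual Noether symmetries in the presence of gravity (3D)**: if the cell
Lagrangian is `L = L₀ + Π` with `L₀` invariant under SE(3) acting simultaneously on all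
slots and `Π(x) = −κ Σ_{p odd} g·x_p` a gravitational potential term, and `φ` satisfies
the 3D discrete Euler–Lagrange node equations at every node with `0 < j < N`, then
(i) the components of the discrete linear momentum orthogonal to `g` are conserved, and
(ii) the discrete angular momentum about the axis `g` is conserved. -/
theorem discrete_noether_gravity_residual_3D
    (N A B C : ℕ) (hN : 1 ≤ N) (hA : 1 ≤ A) (hB : 1 ≤ B) (hC : 1 ≤ C)
    (L L₀ : (Fin 16 → E3) → ℝ) (hL₀ : Differentiable ℝ L₀)
    (κ : ℝ) (g : E3)
    (hinv : ∀ (R : Matrix.specialOrthogonalGroup (Fin 3) ℝ) (cc : E3) (x : Fin 16 → E3),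
      L₀ (fun p => Matrix.toEuclideanLin (R : Matrix (Fin 3) (Fin 3) ℝ) (x p) + cc)
        = L₀ x)
    (hLdef : ∀ x : Fin 16 → E3, L x = L₀ x + (-κ * ∑ m : Fin 8, ⟪g, x (oddSlot m)⟫))
    (φ : ℕ → ℕ → ℕ → ℕ → E3)
    (hDEL : ∀ j a b c : ℕ, 0 < j → j < N → a ≤ A → b ≤ B → c ≤ C →
      delSum3 N A B C L φ (j, a, b, c) = 0) :
    ∀ j : ℕ, j + 2 ≤ N →
      (∀ cc : E3, ⟪g, cc⟫ = 0 →
        ⟪Jlin3 A B C L φ (j + 1) - Jlin3 A B C L φ j, cc⟫ = 0)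
        ∧ ⟪g, Jang3 A B C L φ (j + 1) - Jang3 A B C L φ j⟫ = 0 := by
  have hLfun : L = fun x => L₀ x + piT κ g x := funext fun x => by rw [hLdef x, piT_apply]
  have hLdiff : Differentiable ℝ L := by rw [hLfun]; exact hL₀.add (piT κ g).differentiable
  have hfder : ∀ x : Fin 16 → E3, fderiv ℝ L x = fderiv ℝ L₀ x + piT κ g := by
    intro x
    conv_lhs => rw [hLfun]
    rw [fderiv_fun_add (hL₀ x) ((piT κ g).differentiableAt), (piT κ g).fderiv]
  have key : ∀ x w : Fin 16 → E3,
      (∑ s : Fin 16, ⟪pgrad3 L x s, w s⟫) = fderiv ℝ L₀ x w + piT κ g w := by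
    intro x w
    rw [Finset.sum_congr rfl fun s _ => pgrad_inner L x (hLdiff x) s (w s)]
    rw [← map_sum, Finset.univ_sum_single, hfder x, ContinuousLinearMap.add_apply]
  have keyLin : ∀ (x : Fin 16 → E3) (cc : E3), ⟪g, cc⟫ = 0 →
      (∑ s : Fin 16, ⟪pgrad3 L x s, cc⟫) = 0 := by
    intro x cc hgc
    rw [key x (fun _ => cc), fderiv_trans_dir L₀ hL₀ hinv x cc, piT_apply]
    simp [hgc]
  have keyAng : ∀ x : Fin 16 → E3,
      (∑ s : Fin 16, ⟪g, cross3 (x s) (pgrad3 L x s)⟫) = 0 := by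
    intro x
    rw [Finset.sum_congr rfl fun s _ => inner_cross3 g (x s) (pgrad3 L x s)]
    rw [key x (fun s => cross3 g (x s))]
    have h2 : (fun s : Fin 16 => cross3 g (x s))
        = ∑ k : Fin 3, g k • (fun s : Fin 16 => cross3 (EuclideanSpace.single k (1:ℝ)) (x s)) := by
      funext s
      rw [cross3_decomp g (x s)]
      simp [Finset.sum_apply]
    have h3 : fderiv ℝ L₀ x (fun s => cross3 g (x s)) = 0 := by
      rw [h2, map_sum]
      refine Finset.sum_eq_zero fun k _ => ?_
      rw [map_smul, fderiv_rot_dir L₀ hL₀ hinv x k, smul_zero]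
    rw [h3, piT_apply]
    rw [Finset.sum_congr rfl fun m _ => inner_cross3_self g (x (oddSlot m))]
    simp
  intro j hj
  constructor
  · intro cc hgc
    have hnode : (∑ a ∈ Finset.range (A+1), ∑ b ∈ Finset.range (B+1), ∑ c ∈ Finset.range (C+1),
        ∑ j' ∈ Finset.range N, ∑ a' ∈ Finset.range A, ∑ b' ∈ Finset.range B,
          ∑ c' ∈ Finset.range C, ∑ s : Fin 16,
            if cellNode3 j' a' b' c' s = (j+1, a, b, c) then
              pgrad3 L (jet3 φ j' a' b' c') s else 0) = 0 := by
      refine Finset.sum_eq_zero fun a ha => Finset.sum_eq_zero fun b hb =>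
        Finset.sum_eq_zero fun c hc => ?_
      simp only [Finset.mem_range] at ha hb hc
      exact hDEL (j+1) a b c (by omega) (by omega) (by omega) (by omega) (by omega)
    have hmaster := node_sum N A B C (fun jj a b c s => pgrad3 L (jet3 φ jj a b c) s) j hj
    beta_reduce at hmaster
    have h0 := hmaster.symm.trans hnode
    have h1 : Jlin3 A B C L φ j + (∑ a' ∈ Finset.range A, ∑ b' ∈ Finset.range B,
        ∑ c' ∈ Finset.range C, ∑ m : Fin 8,
          pgrad3 L (jet3 φ (j+1) a' b' c') (oddSlot m)) = 0 := by
      simp only [Finset.sum_add_distrib] at h0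
      rw [Jlin3]
      exact h0
    have hJ := eq_neg_of_add_eq_zero_left h1
    have h2 : Jlin3 A B C L φ (j+1) - Jlin3 A B C L φ j
        = ∑ a' ∈ Finset.range A, ∑ b' ∈ Finset.range B, ∑ c' ∈ Finset.range C,
            ∑ s : Fin 16, pgrad3 L (jet3 φ (j+1) a' b' c') s := by
      rw [hJ, sub_neg_eq_add]
      have hs : ∀ a' b' c' : ℕ, (∑ s : Fin 16, pgrad3 L (jet3 φ (j+1) a' b' c') s)
          = (∑ m : Fin 8, pgrad3 L (jet3 φ (j+1) a' b' c') (oddSlot m))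
            + ∑ m : Fin 8, pgrad3 L (jet3 φ (j+1) a' b' c') (evenSlot m) :=
        fun _ _ _ => sum16split _
      simp only [hs, Finset.sum_add_distrib]
      rw [Jlin3, add_comm]
    rw [h2, sum_inner]
    refine Finset.sum_eq_zero fun a' _ => ?_
    rw [sum_inner]
    refine Finset.sum_eq_zero fun b' _ => ?_
    rw [sum_inner]
    refine Finset.sum_eq_zero fun c' _ => ?_
    rw [sum_inner]
    exact keyLin (jet3 φ (j+1) a' b' c') cc hgc
  · have hnode : (∑ a ∈ Finset.range (A+1), ∑ b ∈ Finset.range (B+1), ∑ c ∈ Finset.range (C+1),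
        ∑ j' ∈ Finset.range N, ∑ a' ∈ Finset.range A, ∑ b' ∈ Finset.range B,
          ∑ c' ∈ Finset.range C, ∑ s : Fin 16,
            if cellNode3 j' a' b' c' s = (j+1, a, b, c) then
              cross3 (jet3 φ j' a' b' c' s) (pgrad3 L (jet3 φ j' a' b' c') s) else 0) = 0 := by
      refine Finset.sum_eq_zero fun a ha => Finset.sum_eq_zero fun b hb =>
        Finset.sum_eq_zero fun c hc => ?_
      simp only [Finset.mem_range] at ha hb hc
      have hjet : ∀ (j' a' b' c' : ℕ) (s : Fin 16),
          cellNode3 j' a' b' c' s = (j+1, a, b, c) →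
          jet3 φ j' a' b' c' s = φ (j+1) a b c := by
        intro j' a' b' c' s h
        simp only [cellNode3, Prod.mk.injEq] at h
        simp only [jet3]
        rw [h.1, h.2.1, h.2.2.1, h.2.2.2]
      have step1 : (∑ j' ∈ Finset.range N, ∑ a' ∈ Finset.range A, ∑ b' ∈ Finset.range B,
          ∑ c' ∈ Finset.range C, ∑ s : Fin 16,
            if cellNode3 j' a' b' c' s = (j+1, a, b, c) then
              cross3 (jet3 φ j' a' b' c' s) (pgrad3 L (jet3 φ j' a' b' c') s) else 0)
          = crossLin (φ (j+1) a b c) (delSum3 N A B C L φ (j+1, a, b, c)) := by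
        rw [delSum3, map_sum]
        refine Finset.sum_congr rfl fun j' _ => ?_
        rw [map_sum]
        refine Finset.sum_congr rfl fun a' _ => ?_
        rw [map_sum]
        refine Finset.sum_congr rfl fun b' _ => ?_
        rw [map_sum]
        refine Finset.sum_congr rfl fun c' _ => ?_
        rw [map_sum]
        refine Finset.sum_congr rfl fun s _ => ?_
        by_cases h : cellNode3 j' a' b' c' s = (j+1, a, b, c)
        · rw [if_pos h, if_pos h, crossLin_apply, hjet j' a' b' c' s h]
        · rw [if_neg h, if_neg h, map_zero]
      rw [step1, hDEL (j+1) a b c (by omega) (by omega) (by omega) (by omega) (by omega),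
        map_zero]
    have hmaster := node_sum N A B C (fun jj a b c s =>
      cross3 (jet3 φ jj a b c s) (pgrad3 L (jet3 φ jj a b c) s)) j hj
    beta_reduce at hmaster
    have h0 := hmaster.symm.trans hnode
    have h1 : Jang3 A B C L φ j + (∑ a' ∈ Finset.range A, ∑ b' ∈ Finset.range B,
        ∑ c' ∈ Finset.range C, ∑ m : Fin 8,
          cross3 (jet3 φ (j+1) a' b' c' (oddSlot m))
            (pgrad3 L (jet3 φ (j+1) a' b' c') (oddSlot m))) = 0 := by
      simp only [Finset.sum_add_distrib] at h0
      rw [Jang3]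
      exact h0
    have hJ := eq_neg_of_add_eq_zero_left h1
    have h2 : Jang3 A B C L φ (j+1) - Jang3 A B C L φ j
        = ∑ a' ∈ Finset.range A, ∑ b' ∈ Finset.range B, ∑ c' ∈ Finset.range C,
            ∑ s : Fin 16, cross3 (jet3 φ (j+1) a' b' c' s)
              (pgrad3 L (jet3 φ (j+1) a' b' c') s) := by
      rw [hJ, sub_neg_eq_add]
      have hs : ∀ a' b' c' : ℕ, (∑ s : Fin 16, cross3 (jet3 φ (j+1) a' b' c' s)
            (pgrad3 L (jet3 φ (j+1) a' b' c') s))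
          = (∑ m : Fin 8, cross3 (jet3 φ (j+1) a' b' c' (oddSlot m))
              (pgrad3 L (jet3 φ (j+1) a' b' c') (oddSlot m)))
            + ∑ m : Fin 8, cross3 (jet3 φ (j+1) a' b' c' (evenSlot m))
              (pgrad3 L (jet3 φ (j+1) a' b' c') (evenSlot m)) :=
        fun _ _ _ => sum16split _
      simp only [hs, Finset.sum_add_distrib]
      rw [Jang3, add_comm]
    rw [h2, inner_sum]
    refine Finset.sum_eq_zero fun a' _ => ?_
    rw [inner_sum]
    refine Finset.sum_eq_zero fun b' _ => ?_
    rw [inner_sum]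
    refine Finset.sum_eq_zero fun c' _ => ?_
    rw [inner_sum]
    exact keyAng (jet3 φ (j+1) a' b' c')

end
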